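/- If the arity function is compatible with the ordering on the type alphabet, then the subtype relation on types is transitive: ρ ≤ σ and σ ≤ τ imply ρ ≤ τ. -/
import Mathlib


/-- Types over a type alphabet `C`: type parameters (indexed by `ℕ`) and
applications of type constructors to lists of types. -/
inductive Ty (C : Type) where
  | param : ℕ → Ty C
  | con : C → List (Ty C) → Ty C

/-- The subtype relation on types: `α ≤ α` for parameters, and
`K(σ₁,…,σ_m) ≤ L(τ₁,…,τ_n)` iff `K ≤ L` and `σ_i ≤ τ_i` for all `i < min m n`. -/
inductive Subty {C : Type} [LE C] : Ty C → Ty C → Prop where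
  | param (n : ℕ) : Subty (.param n) (.param n)
  | con {K L : C} {ss ts : List (Ty C)} :
      K ≤ L →
      (∀ i (h1 : i < ss.length) (h2 : i < ts.length), Subty ss[i] ts[i]) →
      Subty (.con K ss) (.con L ts)

/-- Well-formed types with respect to an arity function `ar`:
every constructor is applied to exactly `ar K` arguments. -/
inductive WF {C : Type} (ar : C → ℕ) : Ty C → Prop where
  | param (n : ℕ) : WF ar (.param n)
  | con {K : C} {ss : List (Ty C)} :
      ss.length = ar K → (∀ σ ∈ ss, WF ar σ) → WF ar (.con K ss)

/-- The arity function is compatible with the ordering on the type alphabet. -/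
def Compatible {C : Type} [LE C] (ar : C → ℕ) : Prop :=
  ∀ K L M : C, K ≤ L → L ≤ M → min (ar K) (ar M) ≤ ar L

/-- if the arity function is compatible with the ordering,
then the subtype relation on types is transitive. -/
theorem subty_trans {C : Type} [PartialOrder C] (ar : C → ℕ)
    (hcompat : Compatible ar)
    (ρ σ τ : Ty C) (hρ : WF ar ρ) (hσ : WF ar σ) (hτ : WF ar τ)
    (h1 : Subty ρ σ) (h2 : Subty σ τ) : Subty ρ τ := by
  induction h1 generalizing τ with
  | param n =>
    exact h2
  | @con K L ss ts hKL hcomp ih =>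
    cases h2 with
    | @con _ M _ us hLM hcomp2 =>
      cases hρ with
      | con hlen1 hmem1 =>
        cases hσ with
        | con hlen2 hmem2 =>
          cases hτ with
          | con hlen3 hmem3 =>
            refine Subty.con (le_trans hKL hLM) ?_
            intro i hi1 hi3
            have hmin : min (ar K) (ar M) ≤ ar L := hcompat K L M hKL hLM
            have hi2 : i < ts.length := by
              rw [hlen2]
              calc i < min ss.length us.length := lt_min hi1 hi3
                _ = min (ar K) (ar M) := by rw [hlen1, hlen3]
                _ ≤ ar L := hmin
            exact ih i hi1 hi2 us[i] (hmem1 _ (List.getElem_mem hi1))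
              (hmem2 _ (List.getElem_mem hi2)) (hmem3 _ (List.getElem_mem hi3))
              (hcomp2 i hi2 hi3)
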